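/- Let K > 0. There exists a constant C > 0, depending only on K, such that for every integer N ≥ 2, every i ∈ {1,…,N}, all vectors π, β ∈ [0,1]^N, and every b ∈ ℝ^N with |b^j| ≤ K for all j, the following holds: if B is the unique solution of the equilibrium drift system with data (π, b) and B̃ is the unique solution of the i-deviated drift system with data (i, π, β, b), then |B̃^k − B^k| ≤ C/N for every k ≠ i. -/

import Mathlib

open Finset

set_option maxHeartbeats 4000000

private lemma abs_factor' {c x s : ℝ} (hc : 0 ≤ c) (h : |c * x| ≤ s) : c * |x| ≤ s := by
  rwa [abs_mul, abs_of_nonneg hc] at h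

/-- Drift estimate of Lemma 7.1: there is `C > 0` depending only on the bound
`K` on `b` such that, when one player `i` deviates, the drifts of the other
players change by at most `C/N`. -/
theorem deviated_drift_perturbation_bound (K : ℝ) (hK : 0 < K) :
    ∃ C : ℝ, 0 < C ∧
      ∀ (N : ℕ), 2 ≤ N → ∀ (i : Fin N) (π β b : Fin N → ℝ),
        (∀ j, π j ∈ Set.Icc (0 : ℝ) 1) →
        (∀ j, β j ∈ Set.Icc (0 : ℝ) 1) →
        (∀ j, |b j| ≤ K) →
        ∀ B Bdev : Fin N → ℝ,
          (∀ k, B k = (1 / (N : ℝ)) * ∑ j, π j * B j - π k * B k + b k) →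
          ((Bdev i = (1 / (N : ℝ)) * ∑ j ∈ Finset.univ.erase i, β j * Bdev j
              - (((N : ℝ) - 1) / N) * π i * Bdev i + b i) ∧
           (∀ k, k ≠ i → Bdev k = (1 / (N : ℝ)) * ∑ j, π j * Bdev j
              - (1 / (N : ℝ)) * β k * Bdev k
              - (((N : ℝ) - 1) / N) * π k * Bdev k + b k)) →
          ∀ k, k ≠ i → |Bdev k - B k| ≤ C / N := by
  refine ⟨100 * K, by positivity, ?_⟩
  intro N hN i π β b hπ hβ hb B Bdev hB hdev k hk
  obtain ⟨hdi, hdk⟩ := hdev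
  have hN2 : (2:ℝ) ≤ (N:ℝ) := by exact_mod_cast hN
  have hN0 : (0:ℝ) < (N:ℝ) := by linarith
  have hinv : (1/(N:ℝ)) * (N:ℝ) = 1 := by field_simp
  set S := ∑ j, π j * B j with hSdef
  set S' := ∑ j, π j * Bdev j with hS'def
  set T := ∑ j ∈ Finset.univ.erase i, β j * Bdev j with hTdef
  -- scaled equilibrium equations
  have eqB : ∀ j, (N:ℝ) * ((1 + π j) * B j) = S + N * b j := by
    intro j
    linear_combination (N:ℝ) * hB j + S * hinv
  have eqD : ∀ j, j ≠ i → ((N:ℝ) + β j + ((N:ℝ) - 1) * π j) * Bdev j = S' + N * b j := by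
    intro j hj
    linear_combination (N:ℝ) * hdk j hj + (S' - β j * Bdev j - ((N:ℝ) - 1) * π j * Bdev j) * hinv
  have eqDi : ((N:ℝ) + ((N:ℝ) - 1) * π i) * Bdev i = T + N * b i := by
    linear_combination (N:ℝ) * hdi + (T - ((N:ℝ) - 1) * π i * Bdev i) * hinv
  have hNb : ∀ j, |(N:ℝ) * b j| ≤ N * K := by
    intro j
    rw [abs_mul, abs_of_nonneg hN0.le]
    exact mul_le_mul_of_nonneg_left (hb j) hN0.le
  -- bounds on B
  have hB1 : ∀ j, ((N:ℝ) * (1 + π j)) * |B j| ≤ |S| + N * K := by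
    intro j
    refine abs_factor' (by nlinarith [(hπ j).1]) ?_
    rw [show ((N:ℝ) * (1 + π j)) * B j = (N:ℝ) * ((1 + π j) * B j) by ring, eqB j]
    exact (abs_add_le _ _).trans (by linarith [hNb j])
  have h1 : ∀ j, (N:ℝ) * |B j| ≤ |S| + N * K := by
    intro j
    nlinarith [hB1 j, mul_nonneg (mul_nonneg hN0.le (hπ j).1) (abs_nonneg (B j))]
  have h2 : ∀ j, (N:ℝ) * (π j * |B j|) ≤ (|S| + N * K) / 2 := by
    intro j
    -- N * π j ≤ (1/2) * (N * (1 + π j))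
    have hslack : (0:ℝ) ≤ (1/2) * ((N:ℝ) * (1 + π j)) - (N:ℝ) * π j := by
      nlinarith [(hπ j).2, hN0.le]
    nlinarith [hB1 j, mul_nonneg hslack (abs_nonneg (B j))]
  have hSabs : |S| ≤ ∑ j, π j * |B j| := by
    refine (Finset.abs_sum_le_sum_abs _ _).trans ?_
    refine Finset.sum_le_sum fun j _ => ?_
    rw [abs_mul, abs_of_nonneg (hπ j).1]
  have hSP : (N:ℝ) * |S| ≤ (N:ℝ) * ((|S| + N * K) / 2) := by
    calc (N:ℝ) * |S| ≤ (N:ℝ) * ∑ j, π j * |B j| :=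
          mul_le_mul_of_nonneg_left hSabs hN0.le
      _ = ∑ j, (N:ℝ) * (π j * |B j|) := by rw [Finset.mul_sum]
      _ ≤ ∑ _j : Fin N, (|S| + N * K) / 2 := Finset.sum_le_sum fun j _ => h2 j
      _ = (N:ℝ) * ((|S| + N * K) / 2) := by
          rw [Finset.sum_const, card_univ, Fintype.card_fin, nsmul_eq_mul]
  have hS : |S| ≤ N * K := by
    have := (mul_le_mul_iff_right₀ hN0).mp hSP
    linarith
  have hB2 : ∀ j, |B j| ≤ 2 * K := by
    intro j
    have h : (N:ℝ) * |B j| ≤ (N:ℝ) * (2 * K) := by linarith [h1 j]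
    exact (mul_le_mul_iff_right₀ hN0).mp h
  -- bounds on Bdev
  have hcD : ∀ j, (0:ℝ) ≤ (N:ℝ) + β j + ((N:ℝ) - 1) * π j := by
    intro j
    nlinarith [(hβ j).1, (hπ j).1]
  have hD1 : ∀ j, j ≠ i →
      ((N:ℝ) + β j + ((N:ℝ) - 1) * π j) * |Bdev j| ≤ |S'| + N * K := by
    intro j hj
    refine abs_factor' (hcD j) ?_
    rw [eqD j hj]
    exact (abs_add_le _ _).trans (by linarith [hNb j])
  have hd1 : ∀ j, j ≠ i → (N:ℝ) * |Bdev j| ≤ |S'| + N * K := by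
    intro j hj
    nlinarith [hD1 j hj, mul_nonneg (hβ j).1 (abs_nonneg (Bdev j)),
      mul_nonneg (mul_nonneg (by linarith : (0:ℝ) ≤ (N:ℝ) - 1) (hπ j).1) (abs_nonneg (Bdev j))]
  have hd2 : ∀ j, j ≠ i → (N:ℝ) * (π j * |Bdev j|) ≤ (2/3) * (|S'| + N * K) := by
    intro j hj
    have hslack : (0:ℝ) ≤ (2/3) * ((N:ℝ) + β j + ((N:ℝ) - 1) * π j) - (N:ℝ) * π j := by
      nlinarith [(hβ j).1, (hπ j).2,
        mul_nonneg (by linarith [(hπ j).2] : (0:ℝ) ≤ 1 - π j) (by linarith : (0:ℝ) ≤ (N:ℝ) + 2)]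
    nlinarith [hD1 j hj, mul_nonneg hslack (abs_nonneg (Bdev j))]
  have hcDi : (0:ℝ) ≤ (N:ℝ) + ((N:ℝ) - 1) * π i := by nlinarith [(hπ i).1]
  have hDi1 : ((N:ℝ) + ((N:ℝ) - 1) * π i) * |Bdev i| ≤ |T| + N * K := by
    refine abs_factor' hcDi ?_
    rw [eqDi]
    exact (abs_add_le _ _).trans (by linarith [hNb i])
  have hdi1 : (N:ℝ) * |Bdev i| ≤ |T| + N * K := by
    nlinarith [hDi1,
      mul_nonneg (mul_nonneg (by linarith : (0:ℝ) ≤ (N:ℝ) - 1) (hπ i).1) (abs_nonneg (Bdev i))]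
  have hdi2 : (N:ℝ) * (π i * |Bdev i|) ≤ (2/3) * (|T| + N * K) := by
    have hslack : (0:ℝ) ≤ (2/3) * ((N:ℝ) + ((N:ℝ) - 1) * π i) - (N:ℝ) * π i := by
      nlinarith [(hπ i).2,
        mul_nonneg (by linarith [(hπ i).2] : (0:ℝ) ≤ 1 - π i) (by linarith : (0:ℝ) ≤ (N:ℝ) + 2)]
    nlinarith [hDi1, mul_nonneg hslack (abs_nonneg (Bdev i))]
  have hcard : ((Finset.univ.erase i).card : ℝ) = (N:ℝ) - 1 := by
    rw [Finset.card_erase_of_mem (Finset.mem_univ i), card_univ, Fintype.card_fin]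
    push_cast [Nat.cast_sub (by omega : 1 ≤ N)]
    ring
  have hT : (N:ℝ) * |T| ≤ ((N:ℝ) - 1) * (|S'| + N * K) := by
    have h0 : |T| ≤ ∑ j ∈ Finset.univ.erase i, |Bdev j| := by
      refine (Finset.abs_sum_le_sum_abs _ _).trans ?_
      refine Finset.sum_le_sum fun j _ => ?_
      rw [abs_mul, abs_of_nonneg (hβ j).1]
      nlinarith [abs_nonneg (Bdev j), (hβ j).2]
    calc (N:ℝ) * |T| ≤ (N:ℝ) * ∑ j ∈ Finset.univ.erase i, |Bdev j| :=
          mul_le_mul_of_nonneg_left h0 hN0.le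
      _ = ∑ j ∈ Finset.univ.erase i, (N:ℝ) * |Bdev j| := by rw [Finset.mul_sum]
      _ ≤ ∑ _j ∈ Finset.univ.erase i, (|S'| + N * K) :=
          Finset.sum_le_sum fun j hj => hd1 j (Finset.ne_of_mem_erase hj)
      _ = ((N:ℝ) - 1) * (|S'| + N * K) := by
          rw [Finset.sum_const, nsmul_eq_mul, hcard]
  have hS'split : S' = (∑ j ∈ Finset.univ.erase i, π j * Bdev j) + π i * Bdev i := by
    rw [hS'def, ← Finset.sum_erase_add _ _ (Finset.mem_univ i)]
  have hS'abs : (N:ℝ) * |S'| ≤ (2/3) * (|T| + N * K) + ((N:ℝ) - 1) * ((2/3) * (|S'| + N * K)) := by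
    have h0 : |S'| ≤ (∑ j ∈ Finset.univ.erase i, π j * |Bdev j|) + π i * |Bdev i| := by
      rw [hS'split]
      refine (abs_add_le _ _).trans (add_le_add ?_ ?_)
      · refine (Finset.abs_sum_le_sum_abs _ _).trans ?_
        refine Finset.sum_le_sum fun j _ => ?_
        rw [abs_mul, abs_of_nonneg (hπ j).1]
      · rw [abs_mul, abs_of_nonneg (hπ i).1]
    calc (N:ℝ) * |S'|
        ≤ (N:ℝ) * ((∑ j ∈ Finset.univ.erase i, π j * |Bdev j|) + π i * |Bdev i|) :=
          mul_le_mul_of_nonneg_left h0 hN0.le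
      _ = (∑ j ∈ Finset.univ.erase i, (N:ℝ) * (π j * |Bdev j|)) + (N:ℝ) * (π i * |Bdev i|) := by
          rw [mul_add, Finset.mul_sum]
      _ ≤ (∑ _j ∈ Finset.univ.erase i, (2/3) * (|S'| + N * K)) + (2/3) * (|T| + N * K) :=
          add_le_add (Finset.sum_le_sum fun j hj => hd2 j (Finset.ne_of_mem_erase hj)) hdi2
      _ = (2/3) * (|T| + N * K) + ((N:ℝ) - 1) * ((2/3) * (|S'| + N * K)) := by
          rw [Finset.sum_const, nsmul_eq_mul, hcard]; ring
  have hS' : |S'| ≤ 3 * N * K := by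
    have hmul := mul_le_mul_of_nonneg_left hS'abs hN0.le
    have hx : ((N:ℝ)^2 + 2) * |S'| ≤ 2 * N * K * ((N:ℝ)^2 + N - 1) := by
      nlinarith [hmul, hT]
    nlinarith [hx, abs_nonneg S', hK.le, sq_nonneg ((N:ℝ) - 1),
      mul_nonneg (mul_nonneg hN0.le hK.le) (sq_nonneg ((N:ℝ) - 1))]
  have hd4 : ∀ j, j ≠ i → |Bdev j| ≤ 4 * K := by
    intro j hj
    have h : (N:ℝ) * |Bdev j| ≤ (N:ℝ) * (4 * K) := by nlinarith [hd1 j hj]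
    exact (mul_le_mul_iff_right₀ hN0).mp h
  have hTb : |T| ≤ 4 * N * K := by
    have h : (N:ℝ) * |T| ≤ (N:ℝ) * (4 * N * K) := by
      nlinarith [hT, hK.le, hS', abs_nonneg S']
    exact (mul_le_mul_iff_right₀ hN0).mp h
  have hdi4 : |Bdev i| ≤ 5 * K := by
    have h : (N:ℝ) * |Bdev i| ≤ (N:ℝ) * (5 * K) := by nlinarith [hdi1, hTb]
    exact (mul_le_mul_iff_right₀ hN0).mp h
  -- difference
  set U := S' - S with hUdef
  have eqΔ : ∀ j, j ≠ i →
      (N:ℝ) * ((1 + π j) * (Bdev j - B j)) = U + (π j - β j) * Bdev j := by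
    intro j hj
    linear_combination eqD j hj - eqB j
  have hpb : ∀ j, j ≠ i → |(π j - β j) * Bdev j| ≤ 4 * K := by
    intro j hj
    rw [abs_mul]
    have h1 : |π j - β j| ≤ 1 :=
      abs_le.mpr ⟨by linarith [(hπ j).1, (hβ j).2], by linarith [(hπ j).2, (hβ j).1]⟩
    nlinarith [abs_nonneg (Bdev j), hd4 j hj, abs_nonneg (π j - β j)]
  have hΔ0 : ∀ j, j ≠ i →
      ((N:ℝ) * (1 + π j)) * |Bdev j - B j| ≤ |U| + 4 * K := by
    intro j hj
    refine abs_factor' (by nlinarith [(hπ j).1]) ?_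
    rw [show ((N:ℝ) * (1 + π j)) * (Bdev j - B j) = (N:ℝ) * ((1 + π j) * (Bdev j - B j)) by ring,
      eqΔ j hj]
    exact (abs_add_le _ _).trans (by linarith [hpb j hj])
  have hΔ1 : ∀ j, j ≠ i → (N:ℝ) * |Bdev j - B j| ≤ |U| + 4 * K := by
    intro j hj
    nlinarith [hΔ0 j hj, mul_nonneg (mul_nonneg hN0.le (hπ j).1) (abs_nonneg (Bdev j - B j))]
  have hΔ2 : ∀ j, j ≠ i → (N:ℝ) * (π j * |Bdev j - B j|) ≤ (|U| + 4 * K) / 2 := by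
    intro j hj
    have hslack : (0:ℝ) ≤ (1/2) * ((N:ℝ) * (1 + π j)) - (N:ℝ) * π j := by
      nlinarith [(hπ j).2, hN0.le]
    nlinarith [hΔ0 j hj, mul_nonneg hslack (abs_nonneg (Bdev j - B j))]
  have hΔi : |Bdev i - B i| ≤ 7 * K := by
    calc |Bdev i - B i| ≤ |Bdev i| + |B i| := abs_sub _ _
      _ ≤ 7 * K := by linarith [hdi4, hB2 i]
  have hUsum : U = ∑ j, π j * (Bdev j - B j) := by
    rw [hUdef, hS'def, hSdef, ← Finset.sum_sub_distrib]
    exact Finset.sum_congr rfl fun j _ => by ring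
  have hUb : |U| ≤ 18 * K := by
    have h0 : |U| ≤ (∑ j ∈ Finset.univ.erase i, π j * |Bdev j - B j|) + π i * |Bdev i - B i| := by
      rw [hUsum, ← Finset.sum_erase_add _ _ (Finset.mem_univ i)]
      refine (abs_add_le _ _).trans (add_le_add ?_ ?_)
      · refine (Finset.abs_sum_le_sum_abs _ _).trans ?_
        refine Finset.sum_le_sum fun j _ => ?_
        rw [abs_mul, abs_of_nonneg (hπ j).1]
      · rw [abs_mul, abs_of_nonneg (hπ i).1]
    have h1 : (N:ℝ) * |U| ≤ ((N:ℝ) - 1) * ((|U| + 4 * K) / 2) + (N:ℝ) * (7 * K) := by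
      calc (N:ℝ) * |U|
          ≤ (N:ℝ) * ((∑ j ∈ Finset.univ.erase i, π j * |Bdev j - B j|) + π i * |Bdev i - B i|) :=
            mul_le_mul_of_nonneg_left h0 hN0.le
        _ = (∑ j ∈ Finset.univ.erase i, (N:ℝ) * (π j * |Bdev j - B j|))
              + (N:ℝ) * (π i * |Bdev i - B i|) := by
            rw [mul_add, Finset.mul_sum]
        _ ≤ (∑ _j ∈ Finset.univ.erase i, (|U| + 4 * K) / 2) + (N:ℝ) * (7 * K) := by
            refine add_le_add
              (Finset.sum_le_sum fun j hj => hΔ2 j (Finset.ne_of_mem_erase hj)) ?_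
            have h2 : π i * |Bdev i - B i| ≤ 7 * K := by
              nlinarith [(hπ i).1, (hπ i).2, abs_nonneg (Bdev i - B i), hΔi, hK.le]
            nlinarith [h2]
        _ = ((N:ℝ) - 1) * ((|U| + 4 * K) / 2) + (N:ℝ) * (7 * K) := by
            rw [Finset.sum_const, nsmul_eq_mul, hcard]
    -- (N+1)|U| ≤ 18 N K  ⇒  |U| ≤ 18 K
    nlinarith [h1, abs_nonneg U, hK.le]
  have hfin : (N:ℝ) * |Bdev k - B k| ≤ 100 * K := by
    linarith [hΔ1 k hk, hUb]
  rw [le_div_iff₀ hN0]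
  linarith [hfin]
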